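/- Let 𝔤 be a finite-dimensional real semisimple Lie algebra of compact type and even rank, 𝔱 ⊆ 𝔤 a maximal abelian subalgebra, I a Samelson complex structure on 𝔤 relative to 𝔱, and g a left-invariant I-Hermitian metric on 𝔤 that is SKT. Let K ⊆ Aut(𝔤) be the closure of {exp(ad H) : H ∈ 𝔱} (a compact abelian group, realizing the right action of the maximal torus T), with Haar probability measure μ, and define h(u,v) = ∫_K g(k·u, k·v) dμ(k). Then h is an inner product on 𝔤 that is I-Hermitian, right T-invariant (i.e., ad(𝔱)-invariant), and SKT. -/

import Mathlib

set_option maxHeartbeats 4000000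
set_option synthInstance.maxHeartbeats 1000000


/-!
STATEMENT 0: symmetrization of an SKT metric by the right torus action.  `K` is the closure of
`{exp (ad H) : H ∈ 𝔱}` inside `End ℝ 𝔤` (a compact abelian group of automorphisms), `μ` its
Haar probability measure (characterized by translation invariance and being supported on `K`),
and `h (u, v) = ∫_K g (k u, k v) dμ(k)`.  Then `h` is an `I`-Hermitian, right `T`-invariant
(i.e. `ad 𝔱`-invariant) inner product which is still SKT.
-/

namespace Stmt0

variable {L : Type*} [LieRing L]

/-- Chevalley–Eilenberg differential of a (left-invariant) 2-form. -/
def dCE2 {A : Type*} [AddCommGroup A] (F : L → L → A) : L → L → L → A :=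
  fun X Y Z => F ⁅X, Y⁆ Z + F ⁅Y, Z⁆ X + F ⁅Z, X⁆ Y

/-- Chevalley–Eilenberg differential of a (left-invariant) 3-form. -/
def dCE3 {A : Type*} [AddCommGroup A] (η : L → L → L → A) : L → L → L → L → A :=
  fun X Y Z W =>
    - η ⁅X, Y⁆ Z W + η ⁅X, Z⁆ Y W - η ⁅X, W⁆ Y Z
      - η ⁅Y, Z⁆ X W + η ⁅Y, W⁆ X Z - η ⁅Z, W⁆ X Y

variable {𝔤 : Type*} [LieRing 𝔤] [LieAlgebra ℝ 𝔤]

/-- A Samelson complex structure on `𝔤` relative to a maximal abelian subalgebra `𝔱`. -/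
def IsSamelson (𝔱 : LieSubalgebra ℝ 𝔤) (I : 𝔤 →ₗ[ℝ] 𝔤) : Prop :=
  (∀ X, I (I X) = -X) ∧
  (∀ H ∈ 𝔱, I H ∈ 𝔱) ∧
  (∀ H ∈ 𝔱, ∀ X, I ⁅H, X⁆ = ⁅H, I X⁆) ∧
  (∀ X Y : 𝔤, ⁅I X, I Y⁆ - ⁅X, Y⁆ - I ⁅I X, Y⁆ - I ⁅X, I Y⁆ = 0)

/-- SKT condition `d(d^cF) = 0` for a (not necessarily bilinear-packaged) metric `h`,
where `F(X,Y) = h(IX,Y)` and `d^cF(X,Y,Z) = -dF(IX,IY,IZ)`. -/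
def IsSKTfun (I : 𝔤 →ₗ[ℝ] 𝔤) (h : 𝔤 → 𝔤 → ℝ) : Prop :=
  ∀ X Y Z W : 𝔤,
    dCE3 (fun a b c => - dCE2 (fun u v => h (I u) v) (I a) (I b) (I c)) X Y Z W = 0

section Helpers
open NormedSpace
variable {E : Type*} [NormedAddCommGroup E] [NormedSpace ℝ E] [CompleteSpace E]

lemma hasDerivAt_exp_apply' (A : E →L[ℝ] E) (x : E) (t : ℝ) :
    HasDerivAt (fun s : ℝ => exp (s • A) x) (A (exp (t • A) x)) t := by
  have h := (hasDerivAt_exp_smul_const (𝕂 := ℝ) A t).clm_apply (hasDerivAt_const t x)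
  have hc : exp (t • A) * A = A * exp (t • A) :=
    (((Commute.refl A).smul_left t).exp_left).eq
  simpa [hc, ContinuousLinearMap.mul_apply] using h

lemma exp_bilin_invariant (b : E →L[ℝ] E →L[ℝ] ℝ) (A : E →L[ℝ] E)
    (hskew : ∀ x y, b (A x) y + b x (A y) = 0) (x y : E) :
    b (exp A x) (exp A y) = b x y := by
  have key : ∀ t : ℝ, HasDerivAt (fun s : ℝ => b (exp (s • A) x) (exp (s • A) y)) 0 t := by
    intro t
    have hx := hasDerivAt_exp_apply' A x t
    have hy := hasDerivAt_exp_apply' A y t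
    have hbx : HasDerivAt (fun s : ℝ => b (exp (s • A) x)) (b (A (exp (t • A) x))) t :=
      b.hasFDerivAt.comp_hasDerivAt t hx
    have h2 := hbx.clm_apply hy
    simpa [hskew] using h2
  have hdiff : Differentiable ℝ (fun s : ℝ => b (exp (s • A) x) (exp (s • A) y)) :=
    fun t => (key t).differentiableAt
  have hconst := is_const_of_deriv_eq_zero hdiff (fun t => (key t).deriv) 1 0
  simpa [one_smul, zero_smul, exp_zero] using hconst

lemma exp_map_bilin (β : E →L[ℝ] E →L[ℝ] E) (A : E →L[ℝ] E)
    (hd : ∀ x y, A (β x y) = β (A x) y + β x (A y)) (x y : E) :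
    exp A (β x y) = β (exp A x) (exp A y) := by
  have key : ∀ t : ℝ, HasDerivAt
      (fun s : ℝ => exp ((1 - s) • A) (β (exp (s • A) x) (exp (s • A) y))) 0 t := by
    intro t
    have hx := hasDerivAt_exp_apply' A x t
    have hy := hasDerivAt_exp_apply' A y t
    have hw : HasDerivAt (fun s : ℝ => β (exp (s • A) x) (exp (s • A) y))
        (A (β (exp (t • A) x) (exp (t • A) y))) t := by
      have h2 := (β.hasFDerivAt.comp_hasDerivAt t hx).clm_apply hy
      simp only [Function.comp_apply] at h2
      rw [← hd] at h2
      exact h2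
    have h1 : HasDerivAt (fun s : ℝ => (1 : ℝ) - s) (-1) t := by
      simpa using (hasDerivAt_id t).const_sub 1
    have hE := hasDerivAt_exp_smul_const (𝕂 := ℝ) A (1 - t)
    have hc : HasDerivAt (fun s : ℝ => exp ((1 - s) • A))
        ((-1 : ℝ) • (exp ((1 - t) • A) * A)) t := by
      have := HasDerivAt.scomp (x := t) hE h1
      simpa [Function.comp_def] using this
    have h3 := hc.clm_apply hw
    simpa [ContinuousLinearMap.smul_apply, ContinuousLinearMap.mul_apply, neg_smul, one_smul,
      neg_add_cancel] using h3
  have hdiff : Differentiable ℝ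
      (fun s : ℝ => exp ((1 - s) • A) (β (exp (s • A) x) (exp (s • A) y))) :=
    fun t => (key t).differentiableAt
  have hconst := is_const_of_deriv_eq_zero hdiff (fun t => (key t).deriv) 0 1
  simpa [one_smul, zero_smul, exp_zero, sub_self, sub_zero] using hconst

open MeasureTheory in
lemma integral_comb6 {α : Type*} [MeasurableSpace α] (μ : Measure α)
    (f1 f2 f3 f4 f5 f6 : α → ℝ) (h1 : Integrable f1 μ) (h2 : Integrable f2 μ)
    (h3 : Integrable f3 μ) (h4 : Integrable f4 μ) (h5 : Integrable f5 μ)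
    (h6 : Integrable f6 μ) :
    ∫ a, (-(f1 a) + f2 a - f3 a - f4 a + f5 a - f6 a) ∂μ
      = -(∫ a, f1 a ∂μ) + (∫ a, f2 a ∂μ) - (∫ a, f3 a ∂μ) - (∫ a, f4 a ∂μ)
        + (∫ a, f5 a ∂μ) - ∫ a, f6 a ∂μ := by
  have h12 : Integrable (fun a => -(f1 a) + f2 a) μ := h1.neg.add h2
  have h123 : Integrable (fun a => -(f1 a) + f2 a - f3 a) μ := h12.sub h3
  have h1234 : Integrable (fun a => -(f1 a) + f2 a - f3 a - f4 a) μ := h123.sub h4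
  have h12345 : Integrable (fun a => -(f1 a) + f2 a - f3 a - f4 a + f5 a) μ := h1234.add h5
  have h1' : Integrable (fun a => -(f1 a)) μ := h1.neg
  rw [integral_sub h12345 h6, integral_add h1234 h5, integral_sub h123 h4,
    integral_sub h12 h3, integral_add h1' h2, integral_neg]

end Helpers

open MeasureTheory in
theorem statement0
    [Module.Finite ℝ 𝔤] [LieAlgebra.IsSemisimple ℝ 𝔤]
    (hcompact : ∀ X : 𝔤, X ≠ 0 → killingForm ℝ 𝔤 X X < 0)
    (𝔱 : LieSubalgebra ℝ 𝔤) (h𝔱ab : IsLieAbelian ↥𝔱)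
    (h𝔱max : ∀ 𝔰 : LieSubalgebra ℝ 𝔤, IsLieAbelian ↥𝔰 → 𝔱 ≤ 𝔰 → 𝔰 = 𝔱)
    (hrank : Even (Module.finrank ℝ ↥𝔱))
    (I : 𝔤 →ₗ[ℝ] 𝔤) (hI : IsSamelson 𝔱 I)
    -- g is a left-invariant I-Hermitian SKT metric
    (g : LinearMap.BilinForm ℝ 𝔤)
    (hsymm : ∀ X Y : 𝔤, g X Y = g Y X)
    (hpos : ∀ X : 𝔤, X ≠ 0 → 0 < g X X)
    (hherm : ∀ X Y : 𝔤, g (I X) (I Y) = g X Y)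
    (hSKT : IsSKTfun I fun X Y => g X Y)
    -- the (canonical) topology on End ℝ 𝔤 and its Borel σ-algebra
    [TopologicalSpace (Module.End ℝ 𝔤)] [IsTopologicalRing (Module.End ℝ 𝔤)]
    [ContinuousSMul ℝ (Module.End ℝ 𝔤)] [T2Space (Module.End ℝ 𝔤)]
    [MeasurableSpace (Module.End ℝ 𝔤)] [BorelSpace (Module.End ℝ 𝔤)]
    -- K is the closure of {exp (ad H) : H ∈ 𝔱}
    (K : Set (Module.End ℝ 𝔤))
    (hK : K = closure
      {k : Module.End ℝ 𝔤 | ∃ H ∈ 𝔱, k = NormedSpace.exp ((LieAlgebra.ad ℝ 𝔤) H)})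
    -- μ is the Haar probability measure of the compact abelian group K:
    -- it is a probability measure carried by K and invariant under all translations by
    -- elements of K
    (μ : Measure (Module.End ℝ 𝔤)) [IsProbabilityMeasure μ]
    (hμK : μ Kᶜ = 0)
    (hμinv : ∀ k ∈ K, μ.map (fun x => k * x) = μ ∧ μ.map (fun x => x * k) = μ)
    -- h is the symmetrization of g
    (h : 𝔤 → 𝔤 → ℝ)
    (hdef : ∀ u v : 𝔤, h u v = ∫ k, g (k u) (k v) ∂μ) :
    -- conclusion: h is an I-Hermitian, right T-invariant inner product which is SKT
    (∀ (a : ℝ) (X X' Y : 𝔤), h (a • X + X') Y = a * h X Y + h X' Y) ∧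
    (∀ X Y : 𝔤, h X Y = h Y X) ∧
    (∀ X : 𝔤, X ≠ 0 → 0 < h X X) ∧
    (∀ X Y : 𝔤, h (I X) (I Y) = h X Y) ∧
    (∀ H ∈ 𝔱, ∀ X Y : 𝔤, h ⁅H, X⁆ Y + h X ⁅H, Y⁆ = 0) ∧
    IsSKTfun I h := by
  classical
  obtain ⟨hI1, hI2, hI3, hI4⟩ := hI
  -- Killing form basics
  have hBsymm : ∀ x y : 𝔤, killingForm ℝ 𝔤 x y = killingForm ℝ 𝔤 y x :=
    fun x y => LieModule.traceForm_comm ℝ 𝔤 𝔤 x y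
  have hBskew : ∀ H x y : 𝔤, killingForm ℝ 𝔤 ⁅H, x⁆ y = - killingForm ℝ 𝔤 x ⁅H, y⁆ :=
    fun H x y => LieModule.traceForm_apply_lie_apply' ℝ 𝔤 𝔤 H x y
  -- inner product structure on 𝔤 coming from the negative of the Killing form
  letI cdi : InnerProductSpace.Core ℝ 𝔤 :=
  { inner := fun x y => - killingForm ℝ 𝔤 x y
    conj_inner_symm := fun x y => by
      simp only [starRingEnd_apply, star_trivial]
      exact congrArg Neg.neg (hBsymm y x)
    re_inner_nonneg := fun x => by
      rcases eq_or_ne x 0 with hx | hx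
      · simp [hx]
      · have := hcompact x hx
        simp only [RCLike.re_to_real]
        linarith
    add_left := fun x y z => by
      simp only [map_add, LinearMap.add_apply]; ring
    smul_left := fun x y r => by
      simp only [LinearMap.map_smul, LinearMap.smul_apply, smul_eq_mul, starRingEnd_apply,
        star_trivial]
      ring
    definite := fun x hx => by
      by_contra hc
      exact (hcompact x hc).ne (neg_eq_zero.mp hx) }
  letI : NormedAddCommGroup 𝔤 := @InnerProductSpace.Core.toNormedAddCommGroup ℝ 𝔤 _ _ _ cdi
  letI : InnerProductSpace ℝ 𝔤 := InnerProductSpace.ofCore cdi.toCore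
  have hnormsq : ∀ x : 𝔤, ‖x‖ ^ 2 = - killingForm ℝ 𝔤 x x := fun x => by
    rw [← real_inner_self_eq_norm_sq]; rfl
  -- packaged continuous bilinear forms
  obtain ⟨g2, hg2⟩ : ∃ b : 𝔤 →L[ℝ] 𝔤 →L[ℝ] ℝ, ∀ x y, b x y = g x y :=
    ⟨LinearMap.toContinuousLinearMap
      ((LinearMap.toContinuousLinearMap :
          (𝔤 →ₗ[ℝ] ℝ) ≃ₗ[ℝ] (𝔤 →L[ℝ] ℝ)).toLinearMap.comp g), fun _ _ => rfl⟩
  obtain ⟨Bc, hBc⟩ : ∃ b : 𝔤 →L[ℝ] 𝔤 →L[ℝ] ℝ, ∀ x y, b x y = killingForm ℝ 𝔤 x y :=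
    ⟨LinearMap.toContinuousLinearMap
      ((LinearMap.toContinuousLinearMap :
          (𝔤 →ₗ[ℝ] ℝ) ≃ₗ[ℝ] (𝔤 →L[ℝ] ℝ)).toLinearMap.comp (killingForm ℝ 𝔤)), fun _ _ => rfl⟩
  obtain ⟨βc, hβc⟩ : ∃ b : 𝔤 →L[ℝ] 𝔤 →L[ℝ] 𝔤, ∀ x y, b x y = ⁅x, y⁆ :=
    ⟨LinearMap.toContinuousLinearMap
      ((LinearMap.toContinuousLinearMap :
          (𝔤 →ₗ[ℝ] 𝔤) ≃ₗ[ℝ] (𝔤 →L[ℝ] 𝔤)).toLinearMap.comp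
        ((LieAlgebra.ad ℝ 𝔤) : 𝔤 →ₗ[ℝ] Module.End ℝ 𝔤)), fun x y => LieAlgebra.ad_apply ℝ 𝔤 x y⟩
  -- continuity of evaluations
  have evCont : ∀ x : 𝔤, Continuous fun k : Module.End ℝ 𝔤 => k x := fun x =>
    LinearMap.continuous_of_finiteDimensional
      (⟨⟨fun k : Module.End ℝ 𝔤 => k x, fun _ _ => rfl⟩, fun _ _ => rfl⟩ :
        Module.End ℝ 𝔤 →ₗ[ℝ] 𝔤)
  have contBil : ∀ (b : 𝔤 →L[ℝ] 𝔤 →L[ℝ] ℝ) (u v : 𝔤),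
      Continuous fun k : Module.End ℝ 𝔤 => b (k u) (k v) := fun b u v =>
    b.continuous₂.comp ((evCont u).prodMk (evCont v))
  have contBilG : ∀ (b : 𝔤 →L[ℝ] 𝔤 →L[ℝ] 𝔤) (u v : 𝔤),
      Continuous fun k : Module.End ℝ 𝔤 => b (k u) (k v) := fun b u v =>
    b.continuous₂.comp ((evCont u).prodMk (evCont v))
  have gcont : ∀ u v : 𝔤, Continuous fun k : Module.End ℝ 𝔤 => g (k u) (k v) := by
    intro u v
    simp only [← hg2]
    exact contBil g2 u v
  -- transfer to continuous endomorphisms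
  set Ψ : (Module.End ℝ 𝔤) ≃ₐ[ℝ] (𝔤 →L[ℝ] 𝔤) :=
    Module.End.toContinuousLinearMap (𝕜 := ℝ) 𝔤 with hΨdef
  have hΨapp : ∀ (m : Module.End ℝ 𝔤) (x : 𝔤), Ψ m x = m x := fun _ _ => rfl
  have hΨc : Continuous fun m : Module.End ℝ 𝔤 => Ψ m :=
    LinearMap.continuous_of_finiteDimensional
      ((LinearMap.toContinuousLinearMap : (𝔤 →ₗ[ℝ] 𝔤) ≃ₗ[ℝ] (𝔤 →L[ℝ] 𝔤)).toLinearMap)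
  have hΨsc : Continuous fun T : 𝔤 →L[ℝ] 𝔤 => Ψ.symm T :=
    LinearMap.continuous_of_finiteDimensional (ContinuousLinearMap.coeLM ℝ :
      (𝔤 →L[ℝ] 𝔤) →ₗ[ℝ] (𝔤 →ₗ[ℝ] 𝔤))
  have hexp : ∀ m : Module.End ℝ 𝔤,
      Ψ (NormedSpace.exp m) = NormedSpace.exp (Ψ m) := by
    intro m
    have hs : Summable fun n : ℕ => ((n.factorial : ℝ))⁻¹ • Ψ m ^ n :=
      NormedSpace.expSeries_summable' (𝕂 := ℝ) (Ψ m)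
    have h2 : Summable fun n : ℕ => ((n.factorial : ℝ))⁻¹ • m ^ n := by
      have h4 := hs.map (Ψ.symm : (𝔤 →L[ℝ] 𝔤) ≃ₐ[ℝ] Module.End ℝ 𝔤) hΨsc
      have h5 : (⇑Ψ.symm ∘ fun n : ℕ => ((n.factorial : ℝ))⁻¹ • Ψ m ^ n)
          = fun n : ℕ => ((n.factorial : ℝ))⁻¹ • m ^ n := by
        funext n
        simp [Function.comp, Algebra.smul_def, map_mul, map_pow, AlgEquiv.commutes]
      rwa [h5] at h4
    have h6 := h2.map_tsum (Ψ : (Module.End ℝ 𝔤) ≃ₐ[ℝ] (𝔤 →L[ℝ] 𝔤)) hΨc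
    rw [NormedSpace.exp_eq_tsum (𝕂 := ℝ), NormedSpace.exp_eq_tsum (𝕂 := ℝ), h6]
    congr 1
    funext n
    simp [Algebra.smul_def, map_mul, map_pow, AlgEquiv.commutes]
  -- every element of K preserves the Killing form, commutes with I, and is an automorphism
  have hKfacts : ∀ k ∈ K,
      (∀ x y : 𝔤, killingForm ℝ 𝔤 (k x) (k y) = killingForm ℝ 𝔤 x y) ∧
      (∀ x : 𝔤, k (I x) = I (k x)) ∧ (∀ x y : 𝔤, k ⁅x, y⁆ = ⁅k x, k y⁆) := by
    have hCclosed : IsClosed {k : Module.End ℝ 𝔤 |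
        (∀ x y : 𝔤, killingForm ℝ 𝔤 (k x) (k y) = killingForm ℝ 𝔤 x y) ∧
        (∀ x : 𝔤, k (I x) = I (k x)) ∧ (∀ x y : 𝔤, k ⁅x, y⁆ = ⁅k x, k y⁆)} := by
      rw [Set.setOf_and, Set.setOf_and]
      refine IsClosed.inter ?_ (IsClosed.inter ?_ ?_)
      · have he : {k : Module.End ℝ 𝔤 |
            ∀ x y : 𝔤, killingForm ℝ 𝔤 (k x) (k y) = killingForm ℝ 𝔤 x y}
            = ⋂ (x : 𝔤) (y : 𝔤),
              {k : Module.End ℝ 𝔤 | killingForm ℝ 𝔤 (k x) (k y) = killingForm ℝ 𝔤 x y} := by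
          ext k; simp [Set.mem_iInter]
        rw [he]
        refine isClosed_iInter fun x => isClosed_iInter fun y => isClosed_eq ?_ continuous_const
        simp only [← hBc]
        exact contBil Bc x y
      · have he : {k : Module.End ℝ 𝔤 | ∀ x : 𝔤, k (I x) = I (k x)}
            = ⋂ (x : 𝔤), {k : Module.End ℝ 𝔤 | k (I x) = I (k x)} := by
          ext k; simp [Set.mem_iInter]
        rw [he]
        refine isClosed_iInter fun x => isClosed_eq (evCont (I x)) ?_
        exact (I.continuous_of_finiteDimensional).comp (evCont x)
      · have he : {k : Module.End ℝ 𝔤 | ∀ x y : 𝔤, k ⁅x, y⁆ = ⁅k x, k y⁆}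
            = ⋂ (x : 𝔤) (y : 𝔤), {k : Module.End ℝ 𝔤 | k ⁅x, y⁆ = ⁅k x, k y⁆} := by
          ext k; simp [Set.mem_iInter]
        rw [he]
        refine isClosed_iInter fun x => isClosed_iInter fun y =>
          isClosed_eq (evCont ⁅x, y⁆) ?_
        have := contBilG βc x y
        simp only [hβc] at this
        exact this
    have hSsub : {k : Module.End ℝ 𝔤 | ∃ H ∈ 𝔱, k = NormedSpace.exp ((LieAlgebra.ad ℝ 𝔤) H)}
        ⊆ {k : Module.End ℝ 𝔤 |
          (∀ x y : 𝔤, killingForm ℝ 𝔤 (k x) (k y) = killingForm ℝ 𝔤 x y) ∧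
          (∀ x : 𝔤, k (I x) = I (k x)) ∧ (∀ x y : 𝔤, k ⁅x, y⁆ = ⁅k x, k y⁆)} := by
      rintro k ⟨H, hH, rfl⟩
      set A' : 𝔤 →L[ℝ] 𝔤 := Ψ ((LieAlgebra.ad ℝ 𝔤) H) with hA'
      have hA'app : ∀ x : 𝔤, A' x = ⁅H, x⁆ := fun x => LieAlgebra.ad_apply ℝ 𝔤 H x
      have hk : ∀ x : 𝔤, (NormedSpace.exp ((LieAlgebra.ad ℝ 𝔤) H)) x
          = NormedSpace.exp A' x := by
        intro x
        rw [hA', ← hexp]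
        rfl
      refine ⟨?_, ?_, ?_⟩
      · intro x y
        rw [hk x, hk y]
        have hskew : ∀ x y : 𝔤, Bc (A' x) y + Bc x (A' y) = 0 := by
          intro x y
          rw [hBc, hBc, hA'app, hA'app, hBskew H x y]
          ring
        have hres := exp_bilin_invariant Bc A' hskew x y
        simpa only [hBc] using hres
      · intro x
        have hcomm : Commute ((LieAlgebra.ad ℝ 𝔤) H) (I : Module.End ℝ 𝔤) := by
          refine LinearMap.ext fun z => ?_
          simp only [Module.End.mul_apply, LieAlgebra.ad_apply ℝ 𝔤]
          exact (hI3 H hH z).symm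
        have h5 := (hcomm.exp_left).eq
        have h6 := DFunLike.congr_fun h5 x
        simpa only [Module.End.mul_apply] using h6
      · intro x y
        rw [hk, hk, hk]
        have hder : ∀ x y : 𝔤, A' (βc x y) = βc (A' x) y + βc x (A' y) := by
          intro x y
          rw [hβc, hβc, hβc, hA'app, hA'app, hA'app]
          exact leibniz_lie H x y
        have hres := exp_map_bilin βc A' hder x y
        simpa only [hβc] using hres
    intro k hk
    have hsubset : K ⊆ {k : Module.End ℝ 𝔤 |
        (∀ x y : 𝔤, killingForm ℝ 𝔤 (k x) (k y) = killingForm ℝ 𝔤 x y) ∧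
        (∀ x : 𝔤, k (I x) = I (k x)) ∧ (∀ x y : 𝔤, k ⁅x, y⁆ = ⁅k x, k y⁆)} := by
      rw [hK]
      exact closure_minimal hSsub hCclosed
    exact hsubset hk
  -- norms are preserved
  have hknorm : ∀ k ∈ K, ∀ x : 𝔤, ‖k x‖ = ‖x‖ := by
    intro k hk x
    have h2 : ‖k x‖ ^ 2 = ‖x‖ ^ 2 := by
      rw [hnormsq, hnormsq, (hKfacts k hk).1 x x]
    calc ‖k x‖ = Real.sqrt (‖k x‖ ^ 2) := (Real.sqrt_sq (norm_nonneg _)).symm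
      _ = Real.sqrt (‖x‖ ^ 2) := by rw [h2]
      _ = ‖x‖ := Real.sqrt_sq (norm_nonneg _)
  -- K is compact and contains 1
  have hKclosed : IsClosed K := by rw [hK]; exact isClosed_closure
  have h1K : (1 : Module.End ℝ 𝔤) ∈ K := by
    rw [hK]
    apply subset_closure
    refine ⟨0, 𝔱.zero_mem, ?_⟩
    simp [NormedSpace.exp_zero]
  have hKcomp : IsCompact K := by
    set Ψh : Module.End ℝ 𝔤 ≃ₜ (𝔤 →L[ℝ] 𝔤) :=
      { toEquiv := Ψ.toEquiv, continuous_toFun := hΨc, continuous_invFun := hΨsc } with hΨh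
    have hsub : Ψh '' K ⊆ Metric.closedBall 0 1 := by
      rintro T ⟨k, hk, rfl⟩
      rw [Metric.mem_closedBall, dist_zero_right]
      refine ContinuousLinearMap.opNorm_le_bound _ zero_le_one fun x => ?_
      rw [one_mul]
      exact le_of_eq (hknorm k hk x)
    have hcl : IsClosed (Ψh '' K) := (Homeomorph.isClosedMap Ψh) K hKclosed
    have hcomp := (isCompact_closedBall (0 : 𝔤 →L[ℝ] 𝔤) 1).of_isClosed_subset hcl hsub
    exact Ψh.isCompact_image.mp hcomp
  have haeK : ∀ᵐ k ∂μ, k ∈ K := by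
    have he : {k : Module.End ℝ 𝔤 | ¬ k ∈ K} = Kᶜ := rfl
    rw [ae_iff, he]
    exact hμK
  -- integrability of the basic integrands
  have hint : ∀ u v : 𝔤, Integrable (fun k : Module.End ℝ 𝔤 => g (k u) (k v)) μ := by
    intro u v
    refine ⟨(gcont u v).aestronglyMeasurable, ?_⟩
    refine HasFiniteIntegral.of_bounded (C := ‖g2‖ * ‖u‖ * ‖v‖) ?_
    filter_upwards [haeK] with k hk
    have he : g (k u) (k v) = g2 (k u) (k v) := (hg2 _ _).symm
    rw [he]
    calc ‖g2 (k u) (k v)‖ ≤ ‖g2‖ * ‖k u‖ * ‖k v‖ := g2.le_opNorm₂ _ _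
      _ = ‖g2‖ * ‖u‖ * ‖v‖ := by rw [hknorm k hk u, hknorm k hk v]
  -- right invariance of h under K
  have hinv : ∀ k0 ∈ K, ∀ u v : 𝔤, h (k0 u) (k0 v) = h u v := by
    intro k0 hk0 u v
    rw [hdef, hdef]
    have hmap := (hμinv k0 hk0).2
    have hmeas : Measurable fun x : Module.End ℝ 𝔤 => x * k0 :=
      (continuous_id.mul continuous_const).measurable
    have hsm : AEStronglyMeasurable (fun k : Module.End ℝ 𝔤 => g (k u) (k v))
        (μ.map fun x => x * k0) := by
      rw [hmap]
      exact (gcont u v).aestronglyMeasurable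
    calc ∫ k, g (k (k0 u)) (k (k0 v)) ∂μ
        = ∫ k, g ((k * k0) u) ((k * k0) v) ∂μ := rfl
      _ = ∫ k, g (k u) (k v) ∂(μ.map fun x => x * k0) :=
          (integral_map hmeas.aemeasurable hsm).symm
      _ = ∫ k, g (k u) (k v) ∂μ := by rw [hmap]
  -- conclusion components
  have hzero : ∀ Y : 𝔤, h 0 Y = 0 := by
    intro Y
    rw [hdef]
    simp
  have c1 : ∀ (a : ℝ) (X X' Y : 𝔤), h (a • X + X') Y = a * h X Y + h X' Y := by
    intro a X X' Y
    rw [hdef, hdef, hdef]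
    have he : ∀ k : Module.End ℝ 𝔤,
        g (k (a • X + X')) (k Y) = a * g (k X) (k Y) + g (k X') (k Y) := by
      intro k
      simp [map_add, _root_.map_smul, smul_eq_mul]
    rw [integral_congr_ae (Filter.Eventually.of_forall he)]
    have hi1 : Integrable (fun k : Module.End ℝ 𝔤 => a * g (k X) (k Y)) μ :=
      (hint X Y).const_mul a
    rw [integral_add hi1 (hint X' Y), integral_const_mul]
  have c2 : ∀ X Y : 𝔤, h X Y = h Y X := by
    intro X Y
    rw [hdef, hdef]
    exact integral_congr_ae (Filter.Eventually.of_forall fun k => hsymm _ _)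
  have c3 : ∀ X : 𝔤, X ≠ 0 → 0 < h X X := by
    intro X hX
    obtain ⟨k0, hk0K, hk0min⟩ := hKcomp.exists_isMinOn ⟨1, h1K⟩ ((gcont X X).continuousOn)
    have hk0X : k0 X ≠ 0 := by
      intro hzero'
      apply hX
      have : ‖X‖ = 0 := by rw [← hknorm k0 hk0K X, hzero', norm_zero]
      exact norm_eq_zero.mp this
    have hcpos : 0 < g (k0 X) (k0 X) := hpos _ hk0X
    have hge : g (k0 X) (k0 X) ≤ h X X := by
      rw [hdef]
      have hle : (fun _ : Module.End ℝ 𝔤 => g (k0 X) (k0 X)) ≤ᵐ[μ]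
          fun k => g (k X) (k X) := by
        filter_upwards [haeK] with k hk
        exact isMinOn_iff.mp hk0min k hk
      have := integral_mono_ae (integrable_const _) (hint X X) hle
      simpa using this
    linarith
  have c4 : ∀ X Y : 𝔤, h (I X) (I Y) = h X Y := by
    intro X Y
    rw [hdef, hdef]
    refine integral_congr_ae ?_
    filter_upwards [haeK] with k hk
    rw [(hKfacts k hk).2.1 X, (hKfacts k hk).2.1 Y, hherm]
  -- bilinearity, packaged
  have hadd1 : ∀ X X' Y : 𝔤, h (X + X') Y = h X Y + h X' Y := by
    intro X X' Y
    have := c1 1 X X' Y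
    simpa using this
  have hsmul1 : ∀ (a : ℝ) (X Y : 𝔤), h (a • X) Y = a * h X Y := by
    intro a X Y
    have := c1 a X 0 Y
    simpa [hzero] using this
  obtain ⟨H2c, hH2⟩ : ∃ b : 𝔤 →L[ℝ] 𝔤 →L[ℝ] ℝ, ∀ x y, b x y = h x y := by
    refine ⟨LinearMap.toContinuousLinearMap
      ((LinearMap.toContinuousLinearMap :
          (𝔤 →ₗ[ℝ] ℝ) ≃ₗ[ℝ] (𝔤 →L[ℝ] ℝ)).toLinearMap.comp
        (LinearMap.mk₂ ℝ h hadd1 hsmul1 ?_ ?_)), fun _ _ => rfl⟩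
    · intro m n₁ n₂
      rw [c2, hadd1, c2 n₁ m, c2 n₂ m]
    · intro c m n
      rw [c2, hsmul1, c2, smul_eq_mul]
  have c5 : ∀ H ∈ 𝔱, ∀ X Y : 𝔤, h ⁅H, X⁆ Y + h X ⁅H, Y⁆ = 0 := by
    intro H hH X Y
    set A' : 𝔤 →L[ℝ] 𝔤 := Ψ ((LieAlgebra.ad ℝ 𝔤) H) with hA'
    have hA'app : ∀ x : 𝔤, A' x = ⁅H, x⁆ := fun x => LieAlgebra.ad_apply ℝ 𝔤 H x
    have e2 : ∀ t : ℝ, Ψ ((LieAlgebra.ad ℝ 𝔤) (t • H)) = t • A' := by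
      intro t
      ext x
      show ((LieAlgebra.ad ℝ 𝔤) (t • H)) x = (t • A') x
      rw [ContinuousLinearMap.smul_apply, hA'app, LieAlgebra.ad_apply ℝ 𝔤, smul_lie]
    have hval : ∀ t : ℝ,
        H2c (NormedSpace.exp (t • A') X) (NormedSpace.exp (t • A') Y) = h X Y := by
      intro t
      have e1 : NormedSpace.exp (t • A')
          = Ψ (NormedSpace.exp ((LieAlgebra.ad ℝ 𝔤) (t • H))) := by
        rw [hexp, e2]
      have hmem : NormedSpace.exp ((LieAlgebra.ad ℝ 𝔤) (t • H)) ∈ K := by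
        rw [hK]
        exact subset_closure ⟨t • H, 𝔱.smul_mem t hH, rfl⟩
      rw [hH2, e1]
      exact hinv _ hmem X Y
    have hX0 : HasDerivAt (fun s : ℝ => NormedSpace.exp (s • A') X) (A' X) 0 := by
      have := hasDerivAt_exp_apply' A' X 0
      simpa [zero_smul, NormedSpace.exp_zero] using this
    have hY0 : HasDerivAt (fun s : ℝ => NormedSpace.exp (s • A') Y) (A' Y) 0 := by
      have := hasDerivAt_exp_apply' A' Y 0
      simpa [zero_smul, NormedSpace.exp_zero] using this
    have hcX : HasDerivAt (fun s : ℝ => H2c (NormedSpace.exp (s • A') X)) (H2c (A' X)) 0 :=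
      H2c.hasFDerivAt.comp_hasDerivAt 0 hX0
    have hD := hcX.clm_apply hY0
    simp only [Function.comp_apply, zero_smul, NormedSpace.exp_zero,
      ContinuousLinearMap.one_apply] at hD
    rw [show (fun s : ℝ =>
        H2c (NormedSpace.exp (s • A') X) (NormedSpace.exp (s • A') Y))
        = fun _ : ℝ => h X Y from funext hval] at hD
    have h0 := hD.unique (hasDerivAt_const 0 (h X Y))
    rw [hH2, hH2, hA'app, hA'app] at h0
    exact h0.symm ▸ h0
  have c6 : IsSKTfun I h := by
    intro X Y Z W
    have hηint : ∀ a b c : 𝔤, Integrable (fun k : Module.End ℝ 𝔤 =>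
        - dCE2 (fun u v => g (k (I u)) (k v)) (I a) (I b) (I c)) μ := by
      intro a b c
      simp only [dCE2]
      have h12 : Integrable (fun k : Module.End ℝ 𝔤 =>
          g (k (I ⁅I a, I b⁆)) (k (I c)) + g (k (I ⁅I b, I c⁆)) (k (I a))) μ :=
        (hint _ _).add (hint _ _)
      have h123 : Integrable (fun k : Module.End ℝ 𝔤 =>
          g (k (I ⁅I a, I b⁆)) (k (I c)) + g (k (I ⁅I b, I c⁆)) (k (I a))
            + g (k (I ⁅I c, I a⁆)) (k (I b))) μ := h12.add (hint _ _)
      exact h123.neg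
    have hηeq : ∀ a b c : 𝔤,
        (∫ k, - dCE2 (fun u v => g (k (I u)) (k v)) (I a) (I b) (I c) ∂μ)
          = - dCE2 (fun u v => h (I u) v) (I a) (I b) (I c) := by
      intro a b c
      simp only [dCE2, hdef]
      have h12 : Integrable (fun k : Module.End ℝ 𝔤 =>
          g (k (I ⁅I a, I b⁆)) (k (I c)) + g (k (I ⁅I b, I c⁆)) (k (I a))) μ :=
        (hint _ _).add (hint _ _)
      rw [integral_neg, integral_add h12 (hint _ _), integral_add (hint _ _) (hint _ _)]
    have hpt : ∀ k ∈ K, dCE3 (fun a b c =>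
        - dCE2 (fun u v => g (k (I u)) (k v)) (I a) (I b) (I c)) X Y Z W = 0 := by
      intro k hk
      have hkI := (hKfacts k hk).2.1
      have hkL := (hKfacts k hk).2.2
      have h0 := hSKT (k X) (k Y) (k Z) (k W)
      simp only [dCE3, dCE2] at h0 ⊢
      simp only [hkI, hkL]
      exact h0
    have E2 : ∫ k, dCE3 (fun a b c =>
        - dCE2 (fun u v => g (k (I u)) (k v)) (I a) (I b) (I c)) X Y Z W ∂μ
        = dCE3 (fun a b c => - dCE2 (fun u v => h (I u) v) (I a) (I b) (I c)) X Y Z W := by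
      simp only [dCE3]
      rw [integral_comb6 μ _ _ _ _ _ _ (hηint ⁅X, Y⁆ Z W) (hηint ⁅X, Z⁆ Y W)
        (hηint ⁅X, W⁆ Y Z) (hηint ⁅Y, Z⁆ X W) (hηint ⁅Y, W⁆ X Z) (hηint ⁅Z, W⁆ X Y),
        hηeq, hηeq, hηeq, hηeq, hηeq, hηeq]
    have E3 : ∫ k, dCE3 (fun a b c =>
        - dCE2 (fun u v => g (k (I u)) (k v)) (I a) (I b) (I c)) X Y Z W ∂μ = 0 := by
      have hae : ∀ᵐ k ∂μ, dCE3 (fun a b c =>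
          - dCE2 (fun u v => g (k (I u)) (k v)) (I a) (I b) (I c)) X Y Z W = (0 : ℝ) := by
        filter_upwards [haeK] with k hk
        exact hpt k hk
      rw [integral_congr_ae hae]
      simp
    rw [← E2, E3]
  exact ⟨c1, c2, c3, c4, c5, c6⟩


end Stmt0
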